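/- Let (λ_k)_{k≥1} satisfy λ_k > 0 for all k, set Λ_n = ∑_{k=1}^n λ_k, and suppose M = sup_{n≥1} (Λ_n/λ_n)·log((Λ_{n+1}/λ_{n+1})/(Λ_n/λ_n)) is finite. Then for every integer N ≥ 1 and every choice of non-negative reals a_1, …, a_N, one has ∑_{n=1}^N ∏_{k=1}^n a_k^{λ_k/Λ_n} ≤ e^M · ∑_{n=1}^N a_n. -/

import Mathlib

open Finset

private lemma carleman_swap_aux (f g : ℕ → ℝ) (N : ℕ) :
    ∑ n ∈ Finset.Icc 1 N, g n * ∑ k ∈ Finset.Icc 1 n, f k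
      = ∑ k ∈ Finset.Icc 1 N, f k * ∑ n ∈ Finset.Icc k N, g n := by
  induction N with
  | zero => simp
  | succ N ih =>
    have h1 : ∀ k ∈ Finset.Icc 1 N,
        f k * ∑ n ∈ Finset.Icc k (N+1), g n
          = f k * ∑ n ∈ Finset.Icc k N, g n + g (N+1) * f k := by
      intro k hk
      rw [Finset.sum_Icc_succ_top ((Finset.mem_Icc.mp hk).2.trans (by omega))]
      ring
    conv_rhs => rw [Finset.sum_Icc_succ_top (by omega : 1 ≤ N + 1),
      Finset.sum_congr rfl h1]
    conv_lhs => rw [Finset.sum_Icc_succ_top (by omega : 1 ≤ N + 1), ih,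
      Finset.sum_Icc_succ_top (by omega : 1 ≤ N + 1)]
    rw [Finset.sum_add_distrib, ← Finset.mul_sum, Finset.Icc_self,
      Finset.sum_singleton]
    ring

private lemma carleman_tele (L : ℕ → ℝ) (k N : ℕ) (h : k ≤ N) :
    ∑ n ∈ Finset.Icc k N, (L n - L (n+1)) = L k - L (N+1) := by
  induction N, h using Nat.le_induction with
  | base => simp
  | succ N hkN ih =>
    rw [Finset.sum_Icc_succ_top (by omega), ih]
    ring

/-- Finite-sum version of the weighted Carleman inequality: for every `N ≥ 1`,
`∑_{n=1}^N G_n ≤ e^M ∑_{n=1}^N a_n`. -/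
theorem weighted_carleman_finite
    (lam : ℕ → ℝ) (hlam : ∀ k ≥ 1, 0 < lam k)
    (Lam : ℕ → ℝ) (hLam : ∀ n, Lam n = ∑ k ∈ Finset.Icc 1 n, lam k)
    (M : ℝ)
    (hM : IsLUB {x : ℝ | ∃ n ≥ 1, x = (Lam n / lam n) *
        Real.log ((Lam (n + 1) / lam (n + 1)) / (Lam n / lam n))} M)
    (N : ℕ) (hN : 1 ≤ N)
    (a : ℕ → ℝ) (ha : ∀ n ≥ 1, 0 ≤ a n) :
    ∑ n ∈ Finset.Icc 1 N, ∏ k ∈ Finset.Icc 1 n, a k ^ (lam k / Lam n) ≤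
      Real.exp M * ∑ n ∈ Finset.Icc 1 N, a n := by
  have hLpos : ∀ n, 1 ≤ n → 0 < Lam n := by
    intro n hn
    rw [hLam]
    refine Finset.sum_pos (fun k hk => hlam k (Finset.mem_Icc.mp hk).1) ?_
    exact ⟨1, Finset.mem_Icc.mpr ⟨le_refl 1, hn⟩⟩
  have hLs : ∀ n, Lam (n+1) = Lam n + lam (n+1) := by
    intro n
    rw [hLam, hLam, Finset.sum_Icc_succ_top (by omega)]
  set t : ℕ → ℝ := fun k => Lam k / lam k with ht_def
  have ht : ∀ k, 1 ≤ k → 0 < t k := fun k hk => div_pos (hLpos k hk) (hlam k hk)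
  set r : ℕ → ℝ := fun k => (t (k+1) / t k) ^ (t k) with hr_def
  have hr : ∀ k, 1 ≤ k → 0 < r k := fun k hk =>
    Real.rpow_pos_of_pos (div_pos (ht (k+1) (by omega)) (ht k hk)) _
  have hrM : ∀ k, 1 ≤ k → r k ≤ Real.exp M := by
    intro k hk
    have h1 : t k * Real.log (t (k+1) / t k) ≤ M := hM.1 ⟨k, hk, rfl⟩
    have h2 : r k = Real.exp (Real.log (t (k+1) / t k) * t k) :=
      Real.rpow_def_of_pos (div_pos (ht (k+1) (by omega)) (ht k hk)) _
    rw [h2]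
    exact Real.exp_le_exp.mpr (by rw [mul_comm]; exact h1)
  set c : ℕ → ℝ := fun k => r k * t k with hc_def
  have hc : ∀ k, 1 ≤ k → 0 < c k := fun k hk => mul_pos (hr k hk) (ht k hk)
  -- key product identity
  have hprod : ∀ n, 1 ≤ n → ∏ k ∈ Finset.Icc 1 n, c k ^ lam k = t (n+1) ^ Lam n := by
    intro n hn
    induction n, hn using Nat.le_induction with
    | base =>
      have hL1 : Lam 1 = lam 1 := by rw [hLam]; simp
      have ht1 : t 1 = 1 := by
        show Lam 1 / lam 1 = 1
        rw [hL1]; exact div_self (hlam 1 le_rfl).ne'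
      rw [Finset.Icc_self, Finset.prod_singleton]
      show (r 1 * t 1) ^ lam 1 = t 2 ^ Lam 1
      have hr1 : r 1 = t 2 := by
        show (t 2 / t 1) ^ (t 1) = t 2
        rw [ht1, div_one, Real.rpow_one]
      rw [hr1, ht1, mul_one, hL1]
    | succ n hn ih =>
      rw [Finset.prod_Icc_succ_top (by omega : 1 ≤ n + 1), ih]
      have hlam1 : 0 < lam (n+1) := hlam (n+1) (by omega)
      have htn1 : 0 < t (n+1) := ht (n+1) (by omega)
      have htn2 : 0 < t (n+1+1) := ht (n+1+1) (by omega)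
      have hdiv : 0 < t (n+1+1) / t (n+1) := div_pos htn2 htn1
      have hexp : t (n+1) * lam (n+1) = Lam (n+1) := by
        show Lam (n+1) / lam (n+1) * lam (n+1) = Lam (n+1)
        field_simp
      have hc1 : c (n+1) ^ lam (n+1)
          = (t (n+1+1) / t (n+1)) ^ Lam (n+1) * t (n+1) ^ lam (n+1) := by
        show (r (n+1) * t (n+1)) ^ lam (n+1) = _
        rw [Real.mul_rpow (hr (n+1) (by omega)).le htn1.le]
        congr 1
        show ((t (n+1+1) / t (n+1)) ^ (t (n+1))) ^ lam (n+1) = _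
        rw [← Real.rpow_mul hdiv.le, hexp]
      rw [hc1, Real.div_rpow htn2.le htn1.le]
      have key : t (n+1) ^ Lam (n+1) = t (n+1) ^ Lam n * t (n+1) ^ lam (n+1) := by
        rw [← Real.rpow_add htn1, ← hLs n]
      have hne : t (n+1) ^ Lam (n+1) ≠ 0 := (Real.rpow_pos_of_pos htn1 _).ne'
      field_simp
      rw [key]
  -- weighted-mean form of the product identity
  have hprodw : ∀ n, 1 ≤ n →
      ∏ k ∈ Finset.Icc 1 n, c k ^ (lam k / Lam n) = t (n+1) := by
    intro n hn
    have h1 : ∀ k ∈ Finset.Icc 1 n, c k ^ (lam k / Lam n)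
        = (c k ^ lam k) ^ (Lam n)⁻¹ := by
      intro k hk
      rw [← Real.rpow_mul (hc k (Finset.mem_Icc.mp hk).1).le, div_eq_mul_inv]
    rw [Finset.prod_congr rfl h1,
        Real.finset_prod_rpow _ _ (fun k hk =>
          (Real.rpow_pos_of_pos (hc k (Finset.mem_Icc.mp hk).1) _).le) _,
        hprod n hn, ← Real.rpow_mul (ht (n+1) (by omega)).le,
        mul_inv_cancel₀ (hLpos n hn).ne', Real.rpow_one]
  -- step 1 : pointwise bound on the geometric mean
  have step1 : ∀ n, 1 ≤ n →
      ∏ k ∈ Finset.Icc 1 n, a k ^ (lam k / Lam n)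
        ≤ ((Lam n)⁻¹ - (Lam (n+1))⁻¹) * ∑ k ∈ Finset.Icc 1 n, lam k * c k * a k := by
    intro n hn
    have hw : ∑ k ∈ Finset.Icc 1 n, lam k / Lam n = 1 := by
      rw [← Finset.sum_div, ← hLam]
      exact div_self (hLpos n hn).ne'
    have amgm := Real.geom_mean_le_arith_mean_weighted (Finset.Icc 1 n)
      (fun k => lam k / Lam n) (fun k => c k * a k)
      (fun k hk => div_nonneg (hlam k (Finset.mem_Icc.mp hk).1).le (hLpos n hn).le)
      hw
      (fun k hk => mul_nonneg (hc k (Finset.mem_Icc.mp hk).1).le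
        (ha k (Finset.mem_Icc.mp hk).1))
    have hsplit : ∏ k ∈ Finset.Icc 1 n, (c k * a k) ^ (lam k / Lam n)
        = t (n+1) * ∏ k ∈ Finset.Icc 1 n, a k ^ (lam k / Lam n) := by
      calc ∏ k ∈ Finset.Icc 1 n, (c k * a k) ^ (lam k / Lam n)
          = ∏ k ∈ Finset.Icc 1 n, (c k ^ (lam k / Lam n) * a k ^ (lam k / Lam n)) :=
            Finset.prod_congr rfl (fun k hk =>
              Real.mul_rpow (hc k (Finset.mem_Icc.mp hk).1).le
                (ha k (Finset.mem_Icc.mp hk).1))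
        _ = (∏ k ∈ Finset.Icc 1 n, c k ^ (lam k / Lam n)) *
              ∏ k ∈ Finset.Icc 1 n, a k ^ (lam k / Lam n) := Finset.prod_mul_distrib
        _ = t (n+1) * ∏ k ∈ Finset.Icc 1 n, a k ^ (lam k / Lam n) := by
              rw [hprodw n hn]
    have hrhs : ∑ k ∈ Finset.Icc 1 n, (lam k / Lam n) * (c k * a k)
        = (Lam n)⁻¹ * ∑ k ∈ Finset.Icc 1 n, lam k * c k * a k := by
      rw [Finset.mul_sum]
      exact Finset.sum_congr rfl (fun k hk => by rw [div_eq_mul_inv]; ring)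
    have htn1 : 0 < t (n+1) := ht (n+1) (by omega)
    have h2 : t (n+1) * ∏ k ∈ Finset.Icc 1 n, a k ^ (lam k / Lam n)
        ≤ (Lam n)⁻¹ * ∑ k ∈ Finset.Icc 1 n, lam k * c k * a k := by
      rw [← hsplit, ← hrhs]; exact amgm
    have hscal : (Lam n)⁻¹ / t (n+1) = (Lam n)⁻¹ - (Lam (n+1))⁻¹ := by
      show (Lam n)⁻¹ / (Lam (n+1) / lam (n+1)) = (Lam n)⁻¹ - (Lam (n+1))⁻¹
      have h3 : Lam (n+1) = Lam n + lam (n+1) := hLs n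
      have h4 : 0 < Lam n := hLpos n hn
      have h5 : 0 < Lam (n+1) := hLpos (n+1) (by omega)
      have h6 : 0 < lam (n+1) := hlam (n+1) (by omega)
      field_simp
      rw [h3]; ring
    calc ∏ k ∈ Finset.Icc 1 n, a k ^ (lam k / Lam n)
        ≤ ((Lam n)⁻¹ * ∑ k ∈ Finset.Icc 1 n, lam k * c k * a k) / t (n+1) := by
          rw [le_div_iff₀ htn1, mul_comm]; exact h2
      _ = ((Lam n)⁻¹ - (Lam (n+1))⁻¹) * ∑ k ∈ Finset.Icc 1 n, lam k * c k * a k := by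
          rw [mul_div_right_comm, hscal]
  -- assemble
  have hb : ∀ k, 1 ≤ k → 0 ≤ lam k * c k * a k := fun k hk =>
    mul_nonneg (mul_nonneg (hlam k hk).le (hc k hk).le) (ha k hk)
  calc ∑ n ∈ Finset.Icc 1 N, ∏ k ∈ Finset.Icc 1 n, a k ^ (lam k / Lam n)
      ≤ ∑ n ∈ Finset.Icc 1 N,
          ((Lam n)⁻¹ - (Lam (n+1))⁻¹) * ∑ k ∈ Finset.Icc 1 n, lam k * c k * a k :=
        Finset.sum_le_sum (fun n hn => step1 n (Finset.mem_Icc.mp hn).1)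
    _ = ∑ k ∈ Finset.Icc 1 N, (lam k * c k * a k) *
          ∑ n ∈ Finset.Icc k N, ((Lam n)⁻¹ - (Lam (n+1))⁻¹) :=
        carleman_swap_aux (fun k => lam k * c k * a k)
          (fun n => (Lam n)⁻¹ - (Lam (n+1))⁻¹) N
    _ = ∑ k ∈ Finset.Icc 1 N, (lam k * c k * a k) * ((Lam k)⁻¹ - (Lam (N+1))⁻¹) := by
        refine Finset.sum_congr rfl (fun k hk => ?_)
        rw [carleman_tele (fun n => (Lam n)⁻¹) k N (Finset.mem_Icc.mp hk).2]
    _ ≤ ∑ k ∈ Finset.Icc 1 N, (lam k * c k * a k) * (Lam k)⁻¹ := by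
        refine Finset.sum_le_sum (fun k hk => ?_)
        have h1 : 0 ≤ (Lam (N+1))⁻¹ := (inv_pos.mpr (hLpos (N+1) (by omega))).le
        have h2 := hb k (Finset.mem_Icc.mp hk).1
        nlinarith
    _ = ∑ k ∈ Finset.Icc 1 N, r k * a k := by
        refine Finset.sum_congr rfl (fun k hk => ?_)
        have hk1 : 1 ≤ k := (Finset.mem_Icc.mp hk).1
        have h4 : lam k ≠ 0 := (hlam k hk1).ne'
        have h5 : Lam k ≠ 0 := (hLpos k hk1).ne'
        show lam k * (r k * (Lam k / lam k)) * a k * (Lam k)⁻¹ = r k * a k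
        field_simp
    _ ≤ ∑ k ∈ Finset.Icc 1 N, Real.exp M * a k :=
        Finset.sum_le_sum (fun k hk =>
          mul_le_mul_of_nonneg_right (hrM k (Finset.mem_Icc.mp hk).1)
            (ha k (Finset.mem_Icc.mp hk).1))
    _ = Real.exp M * ∑ n ∈ Finset.Icc 1 N, a n := by rw [Finset.mul_sum]
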